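/- Every Heisenberg Lie algebra is zpd: the Lie algebra h with basis {c} ∪ {x_i, x_{-i} : i ∈ I} (I a nonempty index set) and brackets [x_i, x_{-i}] = c for all i ∈ I, all other brackets of basis elements zero, is zpd over any field. -/

import Mathlib

/-- The linear span of all brackets `⁅x, y⁆` in a Lie algebra `L` over `F`,
i.e. the derived subalgebra `[L, L]` viewed as a subspace. -/
def lieBracketSpan (F L : Type*) [Field F] [LieRing L] [LieAlgebra F L] : Submodule F L :=
  Submodule.span F {z : L | ∃ x y : L, ⁅x, y⁆ = z}

/-- A Lie algebra `L` over a field `F` is zero product determined (zpd) if every bilinear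
map `f : L × L → F` vanishing on commuting pairs factors through the bracket via a linear
map `Φ : [L, L] → F`. -/
def IsZPD (F L : Type*) [Field F] [LieRing L] [LieAlgebra F L] : Prop :=
  ∀ f : L →ₗ[F] L →ₗ[F] F, (∀ x y : L, ⁅x, y⁆ = 0 → f x y = 0) →
    ∃ Φ : lieBracketSpan F L →ₗ[F] F,
      ∀ x y : L, f x y = Φ ⟨⁅x, y⁆, Submodule.subset_span ⟨x, y, rfl⟩⟩


/-- every Heisenberg Lie algebra is zpd.  Here the Heisenberg algebra over a
field `F` with nonempty index set `I` is any Lie algebra `L` with a basis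
`{c} ∪ {xᵢ, x₋ᵢ : i ∈ I}` (indexed by `Unit ⊕ I ⊕ I`) satisfying `⁅xᵢ, x₋ᵢ⁆ = c` and all
other brackets of basis elements zero. -/
theorem heisenberg_isZPD (F I L : Type*) [Field F] [Nonempty I]
    [LieRing L] [LieAlgebra F L]
    (b : Module.Basis (Unit ⊕ I ⊕ I) F L)
    (hc : ∀ i : I, ⁅b (Sum.inr (Sum.inl i)), b (Sum.inr (Sum.inr i))⁆ = b (Sum.inl ()))
    (hcz : ∀ s : Unit ⊕ I ⊕ I, ⁅b (Sum.inl ()), b s⁆ = 0)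
    (hxx : ∀ i j : I, ⁅b (Sum.inr (Sum.inl i)), b (Sum.inr (Sum.inl j))⁆ = 0)
    (hyy : ∀ i j : I, ⁅b (Sum.inr (Sum.inr i)), b (Sum.inr (Sum.inr j))⁆ = 0)
    (hxy : ∀ i j : I, i ≠ j → ⁅b (Sum.inr (Sum.inl i)), b (Sum.inr (Sum.inr j))⁆ = 0) :
    IsZPD F L := by
  intro f hf
  obtain ⟨i₀⟩ := ‹Nonempty I›
  set X : I → L := fun i => b (Sum.inr (Sum.inl i)) with hX
  set Y : I → L := fun i => b (Sum.inr (Sum.inr i)) with hY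
  set c : L := b (Sum.inl ()) with hcdef
  set K : F := f (X i₀) (Y i₀) with hKdef
  -- brackets with c are zero on both sides
  have hcz' : ∀ s : Unit ⊕ I ⊕ I, ⁅b s, c⁆ = 0 := by
    intro s
    rw [← neg_eq_zero, lie_skew]
    exact hcz s
  have hyx : ∀ i j : I, j ≠ i → ⁅Y i, X j⁆ = 0 := by
    intro i j h
    rw [← neg_eq_zero, lie_skew]
    exact hxy j i h
  have hyx' : ∀ i : I, ⁅Y i, X i⁆ = -c := by
    intro i
    rw [← lie_skew, hc i]
  -- f (X i) (Y i) is independent of i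
  have hKi : ∀ i : I, f (X i) (Y i) = K := by
    intro i
    by_cases h : i = i₀
    · subst h; rfl
    · have h0 : f (X i + X i₀) (Y i - Y i₀) = 0 := by
        apply hf
        rw [add_lie, lie_sub, lie_sub, hc i, hc i₀, hxy i i₀ h, hxy i₀ i fun h' => h h'.symm]
        abel
      have h1 : f (X i) (Y i₀) = 0 := hf _ _ (hxy i i₀ h)
      have h2 : f (X i₀) (Y i) = 0 := hf _ _ (hxy i₀ i fun h' => h h'.symm)
      simp only [map_add, map_sub, LinearMap.add_apply, LinearMap.sub_apply, h1, h2] at h0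
      rw [← hKdef] at h0
      linear_combination h0
  have hKi' : ∀ i : I, f (Y i) (X i) = -K := by
    intro i
    have h0 : f (X i + Y i) (X i + Y i) = 0 := hf _ _ (lie_self _)
    have h1 : f (X i) (X i) = 0 := hf _ _ (hxx i i)
    have h2 : f (Y i) (Y i) = 0 := hf _ _ (hyy i i)
    simp only [map_add, LinearMap.add_apply, h1, h2] at h0
    rw [← hKi i]
    linear_combination h0
  -- the comparison bilinear map
  let Br : L →ₗ[F] L →ₗ[F] F := LinearMap.mk₂ F
    (fun x y => K * (b.repr ⁅x, y⁆ (Sum.inl ())))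
    (by intro x₁ x₂ y
        simp only [add_lie, map_add, Finsupp.coe_add, Pi.add_apply, mul_add])
    (by intro a x y
        simp only [smul_lie, map_smul, Finsupp.coe_smul, Pi.smul_apply, smul_eq_mul]; ring)
    (by intro x y₁ y₂
        simp only [lie_add, map_add, Finsupp.coe_add, Pi.add_apply, mul_add])
    (by intro a x y
        simp only [lie_smul, map_smul, Finsupp.coe_smul, Pi.smul_apply, smul_eq_mul]; ring)
  have hrc : b.repr c (Sum.inl ()) = 1 := by
    rw [hcdef, b.repr_self]; simp
  have hmain : f = Br := by
    apply b.ext; intro s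
    apply b.ext; intro t
    have hBr : ∀ x y : L, Br x y = K * (b.repr ⁅x, y⁆ (Sum.inl ())) := fun _ _ => rfl
    rcases s with u | i | i
    · obtain rfl : u = () := rfl
      rw [hBr, hf _ _ (hcz t), ← hcdef, hcz t]
      simp
    · rcases t with u | j | j
      · obtain rfl : u = () := rfl
        rw [hBr, hf _ _ (hcz' _), ← hcdef, hcz' _]
        simp
      · rw [hBr, hf _ _ (hxx i j), hxx i j]
        simp
      · by_cases h : i = j
        · subst h
          rw [hBr, hc i, hrc, mul_one]
          exact hKi i
        · rw [hBr, hf _ _ (hxy i j h), hxy i j h]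
          simp
    · rcases t with u | j | j
      · obtain rfl : u = () := rfl
        rw [hBr, hf _ _ (hcz' _), ← hcdef, hcz' _]
        simp
      · by_cases h : i = j
        · subst h
          have hbr2 : ⁅b (Sum.inr (Sum.inr i)), b (Sum.inr (Sum.inl i))⁆ = -c := hyx' i
          rw [hBr, hbr2, map_neg]
          simp only [Finsupp.coe_neg, Pi.neg_apply, hrc, mul_neg, mul_one]
          exact hKi' i
        · rw [hBr, hf _ _ (hyx i j fun h' => h h'.symm), hyx i j fun h' => h h'.symm]
          simp
      · rw [hBr, hf _ _ (hyy i j), hyy i j]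
        simp
  refine ⟨K • ((b.coord (Sum.inl ())).comp (lieBracketSpan F L).subtype), ?_⟩
  intro x y
  rw [hmain]
  simp [Module.Basis.coord_apply, smul_eq_mul]
  rfl
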